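/- The two 4-point configurations in R^2 given by P1=(0,0), P2=(0,6), P3=(6*sqrt(2),0), P4=(2*sqrt(2),-1) and Q1=(0,0), Q2=(0,6), Q3=(6*sqrt(2),0), Q4=(2*sqrt(2),5) have the same multiset of pairwise squared distances and the same multiset of squared signed areas of their four triangles, yet there is no Euclidean isometry of R^2 together with a permutation of indices carrying one configuration onto the other. -/

import Mathlib

set_option maxHeartbeats 1000000

/-- The multiset of squared pairwise distances. -/
noncomputable def sqDistMultiset {n : ℕ} (P : Fin n → EuclideanSpace ℝ (Fin 2)) : Multiset ℝ :=
  ((Finset.univ : Finset (Fin n × Fin n)).filter fun p => p.1 < p.2).val.map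
    fun p => dist (P p.1) (P p.2) ^ 2

/-- Twice the signed area of the triangle `P i`, `P j`, `P k`. -/
noncomputable def signedArea {n : ℕ} (P : Fin n → EuclideanSpace ℝ (Fin 2))
    (i j k : Fin n) : ℝ :=
  (P j 0 - P i 0) * (P k 1 - P i 1) - (P j 1 - P i 1) * (P k 0 - P i 0)

/-- The multiset of squared signed areas of all triangles `i < j < k`. -/
noncomputable def sqAreaMultiset {n : ℕ} (P : Fin n → EuclideanSpace ℝ (Fin 2)) : Multiset ℝ :=
  ((Finset.univ : Finset (Fin n × Fin n × Fin n)).filter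
      fun p => p.1 < p.2.1 ∧ p.2.1 < p.2.2).val.map
    fun p => signedArea P p.1 p.2.1 p.2.2 ^ 2

lemma dist_sq' (x y : EuclideanSpace ℝ (Fin 2)) :
    dist x y ^ 2 = (x 0 - y 0)^2 + (x 1 - y 1)^2 := by
  rw [EuclideanSpace.dist_eq, Real.sq_sqrt (by positivity)]
  simp [Fin.sum_univ_two, Real.dist_eq, sq_abs]

lemma pairs_filter : ((Finset.univ : Finset (Fin 4 × Fin 4)).filter fun p => p.1 < p.2).val =
    ({(0,1),(0,2),(0,3),(1,2),(1,3),(2,3)} : Multiset (Fin 4 × Fin 4)) := by decide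

lemma triples_filter : ((Finset.univ : Finset (Fin 4 × Fin 4 × Fin 4)).filter
      fun p => p.1 < p.2.1 ∧ p.2.1 < p.2.2).val =
    ({(0,1,2),(0,1,3),(0,2,3),(1,2,3)} : Multiset (Fin 4 × Fin 4 × Fin 4)) := by decide

theorem stmt19 (P Q : Fin 4 → EuclideanSpace ℝ (Fin 2))
    (hP : P = ![!₂[0,0], !₂[0,6], !₂[6 * Real.sqrt 2, 0], !₂[2 * Real.sqrt 2, -1]])
    (hQ : Q = ![!₂[0,0], !₂[0,6], !₂[6 * Real.sqrt 2, 0], !₂[2 * Real.sqrt 2, 5]]) :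
    sqDistMultiset P = sqDistMultiset Q ∧
    sqAreaMultiset P = sqAreaMultiset Q ∧
    ¬ ∃ (g : EuclideanSpace ℝ (Fin 2) ≃ᵢ EuclideanSpace ℝ (Fin 2))
        (π : Equiv.Perm (Fin 4)), ∀ i, g (P (π i)) = Q i := by
  have hs : Real.sqrt 2 ^ 2 = 2 := Real.sq_sqrt (by norm_num)
  have dP : ∀ i j : Fin 4, dist (P i) (P j) ^ 2 =
      ![![0,36,72,9],![36,0,108,57],![72,108,0,33],![9,57,33,0]] i j := by
    intro i j
    fin_cases i <;> fin_cases j <;>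
      simp [hP, dist_sq'] <;> nlinarith [hs]
  have dQ : ∀ i j : Fin 4, dist (Q i) (Q j) ^ 2 =
      ![![0,36,72,33],![36,0,108,9],![72,108,0,57],![33,9,57,0]] i j := by
    intro i j
    fin_cases i <;> fin_cases j <;>
      simp [hQ, dist_sq'] <;> nlinarith [hs]
  refine ⟨?_, ?_, ?_⟩
  · unfold sqDistMultiset
    rw [pairs_filter]
    simp only [Multiset.insert_eq_cons, Multiset.map_cons, Multiset.map_singleton]
    rw [dP 0 1, dP 0 2, dP 0 3, dP 1 2, dP 1 3, dP 2 3,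
        dQ 0 1, dQ 0 2, dQ 0 3, dQ 1 2, dQ 1 3, dQ 2 3]
    simp only [Matrix.cons_val_zero, Matrix.cons_val_one, Matrix.head_cons,
      Matrix.cons_val_two, Matrix.tail_cons, Matrix.cons_val_three,
      ← Multiset.singleton_add]
    abel
  · have aP12 : signedArea P 0 1 2 ^ 2 = 2592 := by simp [hP, signedArea]; nlinarith [hs]
    have aP13 : signedArea P 0 1 3 ^ 2 = 288 := by simp [hP, signedArea]; nlinarith [hs]
    have aP23 : signedArea P 0 2 3 ^ 2 = 72 := by simp [hP, signedArea]; nlinarith [hs]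
    have aP123 : signedArea P 1 2 3 ^ 2 = 1800 := by simp [hP, signedArea]; nlinarith [hs]
    have aQ12 : signedArea Q 0 1 2 ^ 2 = 2592 := by simp [hQ, signedArea]; nlinarith [hs]
    have aQ13 : signedArea Q 0 1 3 ^ 2 = 288 := by simp [hQ, signedArea]; nlinarith [hs]
    have aQ23 : signedArea Q 0 2 3 ^ 2 = 1800 := by simp [hQ, signedArea]; nlinarith [hs]
    have aQ123 : signedArea Q 1 2 3 ^ 2 = 72 := by simp [hQ, signedArea]; nlinarith [hs]
    unfold sqAreaMultiset
    rw [triples_filter]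
    simp only [Multiset.insert_eq_cons, Multiset.map_cons, Multiset.map_singleton]
    rw [aP12, aP13, aP23, aP123, aQ12, aQ13, aQ23, aQ123]
    simp only [← Multiset.singleton_add]
    abel
  · rintro ⟨g, π, hg⟩
    have key : ∀ i j, dist (P (π i)) (P (π j)) ^ 2 = dist (Q i) (Q j) ^ 2 := by
      intro i j
      rw [← hg i, ← hg j, g.dist_eq]
    have h01 := key 0 1
    have h02 := key 0 2
    have h03 := key 0 3
    rw [dP, dQ] at h01 h02 h03
    have hx : ∀ x : Fin 4, x = 0 ∨ x = 1 ∨ x = 2 ∨ x = 3 := by decide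
    rcases hx (π 0) with h0|h0|h0|h0
    · rcases hx (π 3) with h3|h3|h3|h3 <;> rw [h0, h3] at h03 <;>
        norm_num [Matrix.cons_val_zero, Matrix.cons_val_one, Matrix.head_cons,
          Matrix.cons_val_two, Matrix.tail_cons, Matrix.cons_val_three] at h03
    · rcases hx (π 2) with h2|h2|h2|h2 <;> rw [h0, h2] at h02 <;>
        norm_num [Matrix.cons_val_zero, Matrix.cons_val_one, Matrix.head_cons,
          Matrix.cons_val_two, Matrix.tail_cons, Matrix.cons_val_three] at h02
    · rcases hx (π 1) with h1|h1|h1|h1 <;> rw [h0, h1] at h01 <;>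
        norm_num [Matrix.cons_val_zero, Matrix.cons_val_one, Matrix.head_cons,
          Matrix.cons_val_two, Matrix.tail_cons, Matrix.cons_val_three] at h01
    · rcases hx (π 1) with h1|h1|h1|h1 <;> rw [h0, h1] at h01 <;>
        norm_num [Matrix.cons_val_zero, Matrix.cons_val_one, Matrix.head_cons,
          Matrix.cons_val_two, Matrix.tail_cons, Matrix.cons_val_three] at h01
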